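/- Let n ≥ 1 be an integer, a > 0, C_α > 0, C_ω > 0, and δ ∈ (0, 1/2]. For ε > 0 set b = −(2 + ε)a, α(ε) = C_α ε^δ, and ω̃(ε) = C_ω ε^δ. Then as ε → 0⁺, the modulus of the OWR convergence factor with overlap n at s = i ω̃(ε) and β = −α satisfies |ρ_n(i ω̃(ε), α(ε), −α(ε))| = 1 − (2√2 C_α √a/√C_ω) ε^{δ/2} − (n √2 √C_ω/√a) ε^{δ/2} + O(ε^δ). -/

import Mathlib

/-- The root `λ₁(s) = ((s - b) + √((b - s)² - 4a²))/(2a)` of the characteristic equation,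
with the principal branch of the complex square root. -/
noncomputable def lam1 (a b : ℝ) (s : ℂ) : ℂ :=
  ((s - (b : ℂ)) + (((b : ℂ) - s) ^ 2 - 4 * (a : ℂ) ^ 2) ^ ((1 : ℂ) / 2)) / (2 * (a : ℂ))

/-- The OWR convergence factor with overlap `n`, parameters `α` and `β = -α`:
`ρ_n(s, α, -α) = ((α+1-λ₁(s))/((1+α)λ₁(s)-1))² (1/λ₁(s)²)ⁿ`. -/
noncomputable def rhon (a b : ℝ) (n : ℕ) (s : ℂ) (α : ℝ) : ℂ :=
  (((α : ℂ) + 1 - lam1 a b s) / ((1 + (α : ℂ)) * lam1 a b s - 1)) ^ 2 *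
    (1 / (lam1 a b s) ^ 2) ^ n

lemma sq_cpow_half (z : ℂ) (hz : z ≠ 0) : (z ^ ((1:ℂ)/2)) ^ 2 = z := by
  rw [sq, ← Complex.cpow_add _ _ hz]
  norm_num

lemma re_cpow_half_nonneg (z : ℂ) : 0 ≤ (z ^ ((1:ℂ)/2)).re := by
  rcases eq_or_ne z 0 with h | h
  · simp [h, Complex.zero_cpow (by norm_num : ((1:ℂ)/2) ≠ 0)]
  · rw [Complex.cpow_def_of_ne_zero h, Complex.exp_re]
    have him : (Complex.log z * ((1:ℂ)/2)).im = z.arg / 2 := by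
      simp [Complex.mul_im, Complex.log_im, Complex.log_re]
      ring
    rw [him]
    have h1 := Complex.neg_pi_lt_arg z
    have h2 := Complex.arg_le_pi z
    have := Real.pi_pos
    have : 0 ≤ Real.cos (z.arg / 2) := by
      apply Real.cos_nonneg_of_mem_Icc
      constructor <;> [linarith; linarith]
    positivity

lemma pow_inv_approx (n : ℕ) : ∃ c ≥ (0:ℝ), ∀ x : ℝ, 0 ≤ x →
    |((1+x)^n)⁻¹ - (1 - n*x)| ≤ c * x^2 := by
  induction n with
  | zero => exact ⟨0, le_refl _, by intro x hx; simp⟩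
  | succ n ih =>
    obtain ⟨c, hc, hcx⟩ := ih
    refine ⟨c + (n+1), by positivity, fun x hx => ?_⟩
    have h1 : (0:ℝ) < 1 + x := by linarith
    have key : ((1+x)^(n+1))⁻¹ - (1 - (n+1)*x)
        = (1+x)⁻¹ * (((1+x)^n)⁻¹ - (1 - n*x)) + (n+1)*x^2/(1+x) := by
      field_simp
      ring
    push_cast
    rw [key]
    have h3 : |(1+x)⁻¹ * (((1+x)^n)⁻¹ - (1 - n*x))| ≤ c * x^2 := by
      rw [abs_mul]
      have := hcx x hx
      have h4 : |(1+x)⁻¹| ≤ 1 := by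
        rw [abs_of_pos (by positivity)]
        rw [inv_le_one_iff₀]; right; linarith
      calc |(1+x)⁻¹| * |((1+x)^n)⁻¹ - (1 - n*x)| ≤ 1 * (c * x^2) := by
            apply mul_le_mul h4 this (abs_nonneg _) zero_le_one
        _ = c * x^2 := by ring
    have h5 : |(n+1)*x^2/(1+x)| ≤ (n+1) * x^2 := by
      rw [_root_.abs_of_nonneg (by positivity)]
      rw [div_le_iff₀ h1]
      nlinarith [mul_nonneg (mul_nonneg (by positivity : (0:ℝ) ≤ (n:ℝ)+1) (sq_nonneg x)) hx]
    calc |(1+x)⁻¹ * (((1+x)^n)⁻¹ - (1 - n*x)) + (n+1)*x^2/(1+x)|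
        ≤ |(1+x)⁻¹ * (((1+x)^n)⁻¹ - (1 - n*x))| + |(n+1)*x^2/(1+x)| := abs_add_le _ _
      _ ≤ c * x^2 + (n+1)*x^2 := add_le_add h3 h5
      _ = (c + (n+1)) * x^2 := by ring

set_option maxHeartbeats 1000000 in
lemma core (a Cα Cω : ℝ) (n : ℕ) (ha : 0 < a) (hCα : 0 < Cα) (hCω : 0 < Cω) :
    ∃ K > (0:ℝ), ∃ t₁ > (0:ℝ), ∀ t : ℝ, 0 < t → t ≤ t₁ → ∀ ε : ℝ, 0 < ε → ε ≤ t^4 →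
      |‖rhon a (-(2+ε)*a) n (Complex.I * ((Cω * t^2 : ℝ) : ℂ)) (Cα * t^2)‖
        - (1 - (2*Real.sqrt 2*Cα*Real.sqrt a/Real.sqrt Cω) * t
             - ((n:ℝ)*Real.sqrt 2*Real.sqrt Cω/Real.sqrt a) * t)| ≤ K * t^2 := by
  obtain ⟨cn, hcn, hcnx⟩ := pow_inv_approx n
  -- constants
  set A : ℝ := 2*Real.sqrt 2*Cα*Real.sqrt a/Real.sqrt Cω with hA
  set B : ℝ := (n:ℝ)*Real.sqrt 2*Real.sqrt Cω/Real.sqrt a with hB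
  set sC : ℝ := Real.sqrt (2*a*Cω) with hsC
  have hsCpos : 0 < sC := Real.sqrt_pos.mpr (by positivity)
  set c0 : ℝ := sC/(2*a) with hc0
  have hc0pos : 0 < c0 := by positivity
  have hApos : 0 < A := by positivity
  have hBnn : 0 ≤ B := by positivity
  -- key sqrt identities
  have hsCmul : sC = Real.sqrt 2 * Real.sqrt a * Real.sqrt Cω := by
    rw [hsC, Real.sqrt_mul (by positivity), Real.sqrt_mul (by norm_num)]
  have haa : Real.sqrt a * Real.sqrt a = a := Real.mul_self_sqrt ha.le
  have hAc0 : A * c0 = 2*Cα := by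
    have h2 : Real.sqrt 2 * Real.sqrt 2 = 2 := Real.mul_self_sqrt (by norm_num)
    have hCne : Real.sqrt Cω ≠ 0 := by positivity
    rw [hA, hc0, hsCmul]
    field_simp
    linear_combination (Real.sqrt a*Real.sqrt a) * h2 + 2 * haa
  have hBc0 : B = 2*(n:ℝ)*c0 := by
    have hane : Real.sqrt a ≠ 0 := by positivity
    rw [hB, hc0, hsCmul]
    field_simp
    linear_combination (-(n:ℝ)) * haa
  clear_value A B sC c0
  set K0 : ℝ := (a+Cω)^2 + 4*a^2 with hK0
  have hK0nn : 0 ≤ K0 := by positivity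
  clear_value K0
  set K3 : ℝ := ((a+Cω) + K0/sC)/(2*a) with hK3
  have hK3nn : 0 ≤ K3 := by rw [hK3]; positivity
  clear_value K3
  set Mu : ℝ := Real.sqrt 2 * c0 + K3 with hMu
  have hMunn : 0 ≤ Mu := by rw [hMu]; positivity
  clear_value Mu
  set K4 : ℝ := (2*Real.sqrt 2*c0 + K3)*K3 with hK4
  have hK4nn : 0 ≤ K4 := by rw [hK4]; positivity
  clear_value K4
  set K5 : ℝ := 2*K3 + 2*c0^2 + K4 with hK5
  have hK5nn : 0 ≤ K5 := by rw [hK5]; positivity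
  clear_value K5
  set K6 : ℝ := cn*(2*c0+K5)^2 + n*K5 with hK6
  have hK6nn : 0 ≤ K6 := by rw [hK6]; positivity
  clear_value K6
  set K7 : ℝ := (2*(Cα+Mu) + Cα*Mu)*(Cα*Mu) with hK7
  have hK7nn : 0 ≤ K7 := by rw [hK7]; positivity
  clear_value K7
  set K8 : ℝ := Cα^2 + K4 with hK8
  have hK8nn : 0 ≤ K8 := by rw [hK8]; positivity
  clear_value K8
  set K9 : ℝ := 2*Cα*Mu with hK9
  have hK9nn : 0 ≤ K9 := by rw [hK9]; positivity
  clear_value K9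
  set K10 : ℝ := A*K8 + 4*Cα*K3 + A*(K9+K7) + K7 with hK10
  have hK10nn : 0 ≤ K10 := by rw [hK10]; positivity
  clear_value K10
  set K11 : ℝ := 2*K10/c0^2 with hK11
  have hK11nn : 0 ≤ K11 := by rw [hK11]; positivity
  clear_value K11
  set D : ℝ := K5 + 2*c0 + K8 + 2*(K9+K7) + A + 1 with hD
  have hD1 : 1 ≤ D := by rw [hD]; linarith only [hK5nn, hc0pos, hK8nn, hK9nn, hK7nn, hApos]
  have hDpos : 0 < D := by linarith only [hD1]
  have hDK5 : K5 ≤ D := by rw [hD]; linarith only [hc0pos, hK8nn, hK9nn, hK7nn, hApos]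
  have hDx1 : 2*c0 + K5 ≤ D := by rw [hD]; linarith only [hK8nn, hK9nn, hK7nn, hApos]
  have hDK8 : K8 ≤ D := by rw [hD]; linarith only [hc0pos, hK5nn, hK9nn, hK7nn, hApos]
  have hDK97 : 2*(K9+K7) ≤ D := by rw [hD]; linarith only [hc0pos, hK5nn, hK8nn, hApos]
  have hDA : A ≤ D := by rw [hD]; linarith only [hc0pos, hK5nn, hK8nn, hK9nn, hK7nn]
  clear_value D
  refine ⟨K11 + K6 + A*B + 1, by linarith only [hK11nn, hK6nn, mul_nonneg hApos.le hBnn],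
    min 1 (min (c0/D) (min (c0^2/D) (1/D))), by positivity, ?_⟩
  intro t ht htle ε hε hε4
  have ht1 : t ≤ 1 := le_trans htle (min_le_left _ _)
  have htc0 : t * D ≤ c0 := by
    have h := le_trans htle (le_trans (min_le_right _ _) (min_le_left _ _))
    exact (le_div_iff₀ hDpos).mp h
  have htc02 : t * D ≤ c0^2 := by
    have h := le_trans htle (le_trans (min_le_right _ _) (le_trans (min_le_right _ _) (min_le_left _ _)))
    exact (le_div_iff₀ hDpos).mp h
  have ht1D : t * D ≤ 1 := by
    have h := le_trans htle (le_trans (min_le_right _ _) (le_trans (min_le_right _ _) (min_le_right _ _)))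
    exact (le_div_iff₀ hDpos).mp h
  have htK5 : K5 * t ≤ c0 := by
    have h1 := mul_le_mul_of_nonneg_right hDK5 ht.le
    linarith only [h1, htc0]
  have htx1 : (2*c0+K5) * t ≤ 1 := by
    have h1 := mul_le_mul_of_nonneg_right hDx1 ht.le
    linarith only [h1, ht1D]
  have htK8 : K8 * t ≤ c0^2 := by
    have h1 := mul_le_mul_of_nonneg_right hDK8 ht.le
    linarith only [h1, htc02]
  have htK97 : (K9+K7) * t ≤ c0^2/2 := by
    have h1 := mul_le_mul_of_nonneg_right hDK97 ht.le
    linarith only [h1, htc02]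
  have htA : A * t ≤ 1 := by
    have h1 := mul_le_mul_of_nonneg_right hDA ht.le
    linarith only [h1, ht1D]
  -- setup of complex quantities
  have ht2le : t^2 ≤ 1 := pow_le_one₀ ht.le ht1
  have ht4le : t^4 ≤ t^2 := by
    calc t^4 = t^2*t^2 := by ring
      _ ≤ 1*t^2 := mul_le_mul_of_nonneg_right ht2le (by positivity)
      _ = t^2 := one_mul _
  set w : ℝ := Cω * t^2 with hw
  have hwpos : 0 < w := by rw [hw]; positivity
  set al : ℝ := Cα * t^2 with hal
  have halpos : 0 < al := by rw [hal]; positivity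
  set b : ℝ := -(2+ε)*a with hb
  set s : ℂ := Complex.I * ((w : ℝ) : ℂ) with hs
  set ζ : ℂ := ((ε*a : ℝ) : ℂ) + Complex.I * ((w:ℝ):ℂ) with hζ
  have hζre : ζ.re = ε*a := by rw [hζ]; simp
  have hζim : ζ.im = w := by rw [hζ]; simp
  have hsb : s - (b:ℂ) = ζ + 2*(a:ℂ) := by rw [hs, hζ, hb]; push_cast; ring
  clear_value w al b s ζ
  set Q2 : ℂ := ζ^2 + 4*(a:ℂ)*ζ with hQ2
  have hQ2eq : ((b:ℂ) - s)^2 - 4*(a:ℂ)^2 = Q2 := by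
    have h : (b:ℂ) - s = -(ζ + 2*(a:ℂ)) := by rw [← hsb]; ring
    rw [h, hQ2]; ring
  have hQ2im : Q2.im = 2*(ε*a)*w + 4*a*w := by
    rw [hQ2]
    simp [Complex.add_im, Complex.mul_im, Complex.mul_re, pow_two, hζre, hζim]
    ring
  have hQ2ne : Q2 ≠ 0 := by
    intro h
    rw [h] at hQ2im
    simp only [Complex.zero_im] at hQ2im
    have hpos : 0 < 2*(ε*a)*w + 4*a*w := by positivity
    linarith only [hpos, hQ2im]
  set q : ℂ := Q2 ^ ((1:ℂ)/2) with hq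
  have hq2 : q^2 = Q2 := by rw [hq]; exact sq_cpow_half _ hQ2ne
  have hqre : 0 ≤ q.re := by rw [hq]; exact re_cpow_half_nonneg _
  clear_value Q2 q
  have hr0eq : Real.sqrt (2*a*w) = sC * t := by
    have h1 : 2*a*w = (2*a*Cω)*t^2 := by rw [hw]; ring
    rw [h1, Real.sqrt_mul (by positivity), Real.sqrt_sq ht.le, hsC]
  set q0 : ℂ := ((sC*t : ℝ) : ℂ) * (1 + Complex.I) with hq0
  have hsCt : (sC*t)^2 = 2*a*w := by
    rw [← hr0eq]; exact Real.sq_sqrt (by positivity)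
  have hq0sq : q0^2 = 4*(a:ℂ)*((w:ℝ):ℂ)*Complex.I := by
    calc q0^2 = ((sC*t:ℝ):ℂ)^2 * (1+Complex.I)^2 := by rw [hq0]; ring
      _ = (((sC*t)^2:ℝ):ℂ) * (1+Complex.I)^2 := by rw [← Complex.ofReal_pow]
      _ = ((2*a*w:ℝ):ℂ) * (2*Complex.I) := by
          rw [hsCt]; congr 1
          rw [add_sq, Complex.I_sq]; ring
      _ = 4*(a:ℂ)*((w:ℝ):ℂ)*Complex.I := by push_cast; ring
  clear_value q0
  have hdiffsq : q^2 - q0^2 = ζ^2 + ((4*a^2*ε : ℝ):ℂ) := by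
    rw [hq2, hq0sq, hQ2, hζ]; push_cast; ring
  have habsζ : ‖ζ‖ ≤ (a+Cω)*t^2 := by
    have h1 : ‖ζ‖ ≤ ‖((ε*a:ℝ):ℂ)‖ + ‖Complex.I * ((w:ℝ):ℂ)‖ := by
      rw [hζ]; exact norm_add_le _ _
    have h2 : ‖((ε*a:ℝ):ℂ)‖ = ε*a := by
      rw [Complex.norm_real, Real.norm_eq_abs]; exact abs_of_pos (by positivity)
    have h3 : ‖Complex.I * ((w:ℝ):ℂ)‖ = w := by
      rw [norm_mul, Complex.norm_I, Complex.norm_real, Real.norm_eq_abs, one_mul]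
      exact abs_of_pos hwpos
    rw [h2, h3] at h1
    have h4 : ε*a ≤ a*t^2 := by
      have : ε ≤ t^2 := le_trans hε4 ht4le
      nlinarith only [this, ha]
    rw [hw] at h1
    linarith only [h1, h4]
  have hqq0low : sC * t ≤ ‖q + q0‖ := by
    have h1 : (q + q0).re = q.re + sC*t := by
      rw [Complex.add_re, hq0]
      simp
    calc sC * t ≤ q.re + sC*t := by linarith only [hqre]
      _ = (q+q0).re := h1.symm
      _ ≤ ‖q+q0‖ := Complex.re_le_norm _
  have habsqdiff : ‖q - q0‖ ≤ (K0/sC) * t^3 := by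
    have h1 : ‖q-q0‖ * ‖q+q0‖ = ‖ζ^2 + ((4*a^2*ε : ℝ):ℂ)‖ := by
      rw [← norm_mul]
      congr 1
      linear_combination hdiffsq
    have h2 : ‖ζ^2 + ((4*a^2*ε : ℝ):ℂ)‖ ≤ K0 * t^4 := by
      calc ‖ζ^2 + ((4*a^2*ε : ℝ):ℂ)‖
          ≤ ‖ζ^2‖ + ‖((4*a^2*ε : ℝ):ℂ)‖ := norm_add_le _ _
        _ = (‖ζ‖)^2 + 4*a^2*ε := by
            rw [norm_pow, Complex.norm_real, Real.norm_eq_abs, abs_of_pos (by positivity)]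
        _ ≤ ((a+Cω)*t^2)^2 + 4*a^2*t^4 := by
            have h3 : (‖ζ‖)^2 ≤ ((a+Cω)*t^2)^2 := by
              apply pow_le_pow_left₀ (norm_nonneg _) habsζ
            have h4 : 4*a^2*ε ≤ 4*a^2*t^4 := by nlinarith only [hε4, sq_nonneg a, ha]
            linarith only [h3, h4]
        _ = K0 * t^4 := by rw [hK0]; ring
    have h3 : 0 < sC * t := by positivity
    rw [← h1] at h2
    have h4 : ‖q - q0‖ * (sC * t) ≤ K0 * t^4 := by
      calc ‖q - q0‖ * (sC * t) ≤ ‖q-q0‖ * ‖q+q0‖ :=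
            mul_le_mul_of_nonneg_left hqq0low (norm_nonneg _)
        _ ≤ K0 * t^4 := h2
    rw [show (K0/sC) * t^3 = (K0*t^4)/(sC*t) from by field_simp]
    rw [le_div_iff₀ h3]
    exact h4
  -- lambda and mu
  have ha2ne : (2*(a:ℂ)) ≠ 0 := by
    simp only [ne_eq, mul_eq_zero]
    push_neg
    constructor
    · norm_num
    · exact_mod_cast ha.ne'
  set μ : ℂ := (ζ + q)/(2*(a:ℂ)) with hμ
  have hlam : lam1 a b s = 1 + μ := by
    rw [lam1, hQ2eq, hμ, ← hq, hsb]
    field_simp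
    have hane : (a:ℂ) ≠ 0 := by exact_mod_cast ha.ne'
    rw [div_eq_iff hane, add_mul, div_mul_cancel₀ _ hane]; ring
  set μ0 : ℂ := ((c0*t : ℝ) : ℂ) * (1 + Complex.I) with hμ0
  have hμ0q0 : μ0 = q0 / (2*(a:ℂ)) := by
    rw [hμ0, hq0, hc0]
    push_cast
    field_simp
  clear_value μ μ0
  have hEbound : ‖μ - μ0‖ ≤ K3 * t^2 := by
    have h1 : μ - μ0 = (ζ + (q - q0))/(2*(a:ℂ)) := by
      rw [hμ, hμ0q0]; ring
    rw [h1, norm_div]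
    have h2 : ‖2*(a:ℂ)‖ = 2*a := by
      rw [norm_mul]
      simp [Complex.norm_real, Real.norm_eq_abs, abs_of_pos ha]
    rw [h2, div_le_iff₀ (by positivity)]
    calc ‖ζ + (q - q0)‖ ≤ ‖ζ‖ + ‖q - q0‖ := norm_add_le _ _
      _ ≤ (a+Cω)*t^2 + (K0/sC)*t^3 := add_le_add habsζ habsqdiff
      _ ≤ (a+Cω)*t^2 + (K0/sC)*t^2 := by
          have h5 : t^3 ≤ t^2 := by nlinarith only [ht, ht1]
          have h6 : 0 ≤ K0/sC := by positivity
          nlinarith only [h5, h6]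
      _ = K3 * t^2 * (2*a) := by rw [hK3]; field_simp
  -- scalar estimates for mu
  have hμ0re : μ0.re = c0*t := by rw [hμ0]; simp
  have hμre : |μ.re - c0*t| ≤ K3*t^2 := by
    have h1 : μ.re - c0*t = (μ - μ0).re := by rw [Complex.sub_re, hμ0re]
    rw [h1]
    exact le_trans (Complex.abs_re_le_norm _) hEbound
  have habsμ0 : ‖μ0‖ = Real.sqrt 2 * (c0*t) := by
    rw [hμ0, norm_mul, Complex.norm_real, Real.norm_eq_abs, abs_of_pos (by positivity)]
    have h1 : ‖1+Complex.I‖ = Real.sqrt 2 := by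
      rw [Complex.norm_def, Complex.normSq_apply]
      norm_num
    rw [h1]; ring
  have habsμdiff : |‖μ‖ - Real.sqrt 2 * (c0*t)| ≤ K3*t^2 := by
    rw [← habsμ0]
    exact le_trans (abs_norm_sub_norm_le _ _) hEbound
  have ht2t : t^2 ≤ t := by nlinarith only [ht, ht1]
  have ht3t2 : t^3 ≤ t^2 := by nlinarith only [ht, ht1]
  have hμub : ‖μ‖ ≤ Mu * t := by
    have h2 := (abs_le.mp habsμdiff).2
    rw [hMu]
    nlinarith only [h2, ht2t, hK3nn, hc0pos]
  have hnsμ : |Complex.normSq μ - 2*c0^2*t^2| ≤ K4*t^3 := by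
    have hpnn : 0 ≤ ‖μ‖ := norm_nonneg μ
    have hsq2 : Real.sqrt 2 ^ 2 = 2 := Real.sq_sqrt (by norm_num)
    have hid : Complex.normSq μ - 2*c0^2*t^2
        = (‖μ‖ - Real.sqrt 2*(c0*t))*(‖μ‖ + Real.sqrt 2*(c0*t)) := by
      rw [← Complex.sq_norm]
      linear_combination (c0^2*t^2) * hsq2
    have hup : ‖μ‖ + Real.sqrt 2*(c0*t) ≤ (2*Real.sqrt 2*c0 + K3)*t := by
      have h2 := (abs_le.mp habsμdiff).2
      have hs2 : 0 < Real.sqrt 2 := by positivity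
      nlinarith only [h2, ht2t, hK3nn, hc0pos, hs2, ht]
    have henn : 0 ≤ ‖μ‖ + Real.sqrt 2*(c0*t) :=
      add_nonneg hpnn (mul_nonneg (Real.sqrt_nonneg 2) (by positivity))
    rw [hid, abs_mul, hK4]
    calc |‖μ‖ - Real.sqrt 2*(c0*t)| * |‖μ‖ + Real.sqrt 2*(c0*t)|
        ≤ (K3*t^2) * ((2*Real.sqrt 2*c0 + K3)*t) := by
          apply mul_le_mul habsμdiff _ (abs_nonneg _) (by positivity)
          rw [_root_.abs_of_nonneg henn]; exact hup
      _ = (2*Real.sqrt 2*c0 + K3)*K3*t^3 := by ring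
  have hnsnn : 0 ≤ Complex.normSq μ := Complex.normSq_nonneg μ
  set x : ℝ := 2*μ.re + Complex.normSq μ with hx
  clear_value x
  have hxdev : |x - 2*c0*t| ≤ K5*t^2 := by
    rw [hx]
    have h1 := abs_le.mp hμre
    have h2 := abs_le.mp hnsμ
    rw [abs_le, hK5]; constructor
    · nlinarith only [h1.1, hnsnn, hK4nn, hc0pos, sq_nonneg t, hK3nn]
    · nlinarith only [h1.2, h2.2, ht3t2, hK4nn, hc0pos]
  have hxpos : c0*t ≤ x := by
    have h1 := (abs_le.mp hxdev).1
    have h2 := mul_le_mul_of_nonneg_right htK5 ht.le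
    nlinarith only [h1, h2]
  have hxub : x ≤ (2*c0+K5)*t := by
    have h1 := (abs_le.mp hxdev).2
    nlinarith only [h1, ht2t, hK5nn]
  have hx1 : x ≤ 1 := le_trans hxub htx1
  have hx0 : 0 ≤ x := le_trans (mul_pos hc0pos ht).le hxpos
  have hlamsq : (‖lam1 a b s‖)^2 = 1 + x := by
    rw [hlam, Complex.sq_norm, hx, Complex.normSq_apply, Complex.normSq_apply]
    simp only [Complex.add_re, Complex.add_im, Complex.one_re, Complex.one_im]
    ring
  have hR2 : |((1+x)^n)⁻¹ - (1 - B*t)| ≤ K6*t^2 := by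
    have h1 := hcnx x hx0
    have h2 : |(n:ℝ)*x - B*t| ≤ (n:ℝ)*(K5*t^2) := by
      rw [hBc0]
      have h3 : (n:ℝ)*x - 2*(n:ℝ)*c0*t = (n:ℝ)*(x - 2*c0*t) := by ring
      rw [h3, abs_mul, Nat.abs_cast]
      exact mul_le_mul_of_nonneg_left hxdev (Nat.cast_nonneg n)
    have hx2 : x^2 ≤ ((2*c0+K5)*t)^2 := pow_le_pow_left₀ hx0 hxub 2
    calc |((1+x)^n)⁻¹ - (1 - B*t)| ≤ |((1+x)^n)⁻¹ - (1 - (n:ℝ)*x)| + |(n:ℝ)*x - B*t| := by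
          have h4 : ((1+x)^n)⁻¹ - (1 - B*t) = (((1+x)^n)⁻¹ - (1 - (n:ℝ)*x)) + (B*t - (n:ℝ)*x) := by ring
          rw [h4]
          refine le_trans (abs_add_le _ _) ?_
          rw [abs_sub_comm (B*t)]
      _ ≤ cn*x^2 + (n:ℝ)*(K5*t^2) := add_le_add h1 h2
      _ ≤ cn*((2*c0+K5)*t)^2 + (n:ℝ)*(K5*t^2) := by nlinarith only [hx2, hcn]
      _ = K6*t^2 := by rw [hK6]; ring
  -- rational factor
  set N2 : ℝ := Complex.normSq ((al:ℂ) - μ) with hN2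
  set D2 : ℝ := Complex.normSq ((al:ℂ) + μ + (al:ℂ)*μ) with hD2
  have hN2m : N2 = (al^2 + Complex.normSq μ) - 2*al*μ.re := by
    rw [hN2, Complex.normSq_apply, Complex.normSq_apply]
    simp only [Complex.sub_re, Complex.sub_im, Complex.ofReal_re, Complex.ofReal_im]
    ring
  have hD02 : Complex.normSq ((al:ℂ) + μ) = (al^2 + Complex.normSq μ) + 2*al*μ.re := by
    rw [Complex.normSq_apply, Complex.normSq_apply]
    simp only [Complex.add_re, Complex.add_im, Complex.ofReal_re, Complex.ofReal_im]
    ring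
  have ht3t : t^3 ≤ t := le_trans ht3t2 ht2t
  have ht4t3 : t^4 ≤ t^3 := by
    have h := mul_le_mul_of_nonneg_left ht1 (le_of_lt (pow_pos ht 3))
    nlinarith only [h]
  have hX : ‖(al:ℂ) + μ‖ ≤ (Cα + Mu)*t := by
    calc ‖(al:ℂ)+μ‖ ≤ ‖(al:ℂ)‖ + ‖μ‖ := norm_add_le _ _
      _ ≤ al + Mu*t := by
          rw [Complex.norm_real, Real.norm_eq_abs, abs_of_pos halpos]
          linarith only [hμub]
      _ ≤ (Cα + Mu)*t := by rw [hal]; nlinarith only [ht2t, hCα, hMunn, ht]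
  have hY : ‖(al:ℂ)*μ‖ ≤ (Cα*Mu)*t^3 := by
    rw [norm_mul, Complex.norm_real, Real.norm_eq_abs, abs_of_pos halpos, hal]
    calc Cα*t^2 * ‖μ‖ ≤ Cα*t^2 * (Mu*t) := mul_le_mul_of_nonneg_left hμub (by positivity)
      _ = (Cα*Mu)*t^3 := by ring
  have hdbound : |D2 - (al^2 + Complex.normSq μ + 2*al*μ.re)| ≤ K7*t^4 := by
    rw [← hD02]
    have h1 : |‖(al:ℂ)+μ+(al:ℂ)*μ‖ - ‖(al:ℂ)+μ‖| ≤ ‖(al:ℂ)*μ‖ := by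
      have h2 := abs_norm_sub_norm_le ((al:ℂ)+μ+(al:ℂ)*μ) ((al:ℂ)+μ)
      have e : (al:ℂ)+μ+(al:ℂ)*μ - ((al:ℂ)+μ) = (al:ℂ)*μ := by ring
      rwa [e] at h2
    have hid2 : D2 - Complex.normSq ((al:ℂ)+μ)
        = (‖(al:ℂ)+μ+(al:ℂ)*μ‖ - ‖(al:ℂ)+μ‖)
          * (‖(al:ℂ)+μ+(al:ℂ)*μ‖ + ‖(al:ℂ)+μ‖) := by
      rw [hD2, ← Complex.sq_norm, ← Complex.sq_norm]
      ring
    rw [hid2, abs_mul]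
    have hPnn := norm_nonneg ((al:ℂ)+μ+(al:ℂ)*μ)
    have hP0nn := norm_nonneg ((al:ℂ)+μ)
    have hsum : |‖(al:ℂ)+μ+(al:ℂ)*μ‖ + ‖(al:ℂ)+μ‖|
        ≤ (2*(Cα+Mu) + Cα*Mu)*t := by
      rw [_root_.abs_of_nonneg (by linarith only [hPnn, hP0nn])]
      have h3 := abs_le.mp h1
      have h4 := mul_le_mul_of_nonneg_left ht3t (mul_nonneg hCα.le hMunn)
      linarith only [h3.2, hX, hY, h4]
    calc |‖(al:ℂ)+μ+(al:ℂ)*μ‖ - ‖(al:ℂ)+μ‖|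
          * |‖(al:ℂ)+μ+(al:ℂ)*μ‖ + ‖(al:ℂ)+μ‖|
        ≤ ((Cα*Mu)*t^3) * ((2*(Cα+Mu) + Cα*Mu)*t) := by
          apply mul_le_mul (le_trans h1 hY) hsum (abs_nonneg _) (by positivity)
      _ = K7*t^4 := by rw [hK7]; ring
  clear_value N2 D2
  set m : ℝ := al^2 + Complex.normSq μ with hm
  set g : ℝ := 2*al*μ.re with hg
  clear_value m g
  have hN2mg : N2 = m - g := hN2m
  have hdb : |D2 - (m + g)| ≤ K7*t^4 := hdbound
  have hmdev : |m - 2*c0^2*t^2| ≤ K8*t^3 := by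
    rw [hm, hK8]
    have h1 := abs_le.mp hnsμ
    have hal4 : al^2 ≤ Cα^2*t^3 := by rw [hal]; nlinarith only [ht, ht1, hCα]
    have hCat3 : 0 ≤ Cα^2*t^3 := by positivity
    rw [abs_le]; constructor
    · nlinarith only [h1.1, sq_nonneg al, hCat3]
    · nlinarith only [h1.2, hal4]
  have hmlow : c0^2*t^2 ≤ m := by
    have h1 := (abs_le.mp hmdev).1
    have h2 := mul_le_mul_of_nonneg_right htK8 (sq_nonneg t)
    nlinarith only [h1, h2]
  have hgdev : |g - 2*Cα*c0*t^3| ≤ 2*Cα*K3*t^4 := by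
    rw [hg, hal]
    have e : 2*(Cα*t^2)*μ.re - 2*Cα*c0*t^3 = (2*Cα*t^2)*(μ.re - c0*t) := by ring
    rw [e, abs_mul, _root_.abs_of_nonneg (by positivity : (0:ℝ) ≤ 2*Cα*t^2)]
    calc (2*Cα*t^2)*|μ.re - c0*t| ≤ (2*Cα*t^2)*(K3*t^2) :=
          mul_le_mul_of_nonneg_left hμre (by positivity)
      _ = 2*Cα*K3*t^4 := by ring
  have hgabs : |g| ≤ K9*t^3 := by
    rw [hg, hal, hK9, abs_mul, abs_mul]
    have h1 : |μ.re| ≤ Mu*t := le_trans (Complex.abs_re_le_norm μ) hμub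
    have h2 : |(2:ℝ)| = 2 := by norm_num
    have h3 : |Cα*t^2| = Cα*t^2 := abs_of_pos (by positivity)
    rw [h2, h3]
    calc 2*(Cα*t^2)*|μ.re| ≤ 2*(Cα*t^2)*(Mu*t) := mul_le_mul_of_nonneg_left h1 (by positivity)
      _ = 2*Cα*Mu*t^3 := by ring
  have hD2low : c0^2/2*t^2 ≤ D2 := by
    have h1 := (abs_le.mp hdb).1
    have h2 := (abs_le.mp hgabs).1
    have h3 := mul_le_mul_of_nonneg_right htK97 (sq_nonneg t)
    have h5 := mul_le_mul_of_nonneg_left ht4t3 hK7nn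
    linarith only [h1, h2, h3, h5, hmlow]
  have hD2pos : 0 < D2 := lt_of_lt_of_le (by positivity) hD2low
  have hnum : |N2 - (1-A*t)*D2| ≤ K10*t^4 := by
    have hdec : N2 - (1-A*t)*D2
        = (A*t*m - 2*g) + A*t*(g + (D2 - (m+g))) - (D2 - (m+g)) := by
      rw [hN2mg]; ring
    have h1 : |A*t*m - 2*g| ≤ (A*K8 + 4*Cα*K3)*t^4 := by
      have e : A*t*m - 2*g = A*t*(m - 2*c0^2*t^2) + (2*((A*c0)*c0)*t^3 - 2*g) := by ring
      rw [e]
      have e2 : 2*((A*c0)*c0)*t^3 - 2*g = -(2*(g - 2*Cα*c0*t^3)) := by rw [hAc0]; ring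
      calc |A*t*(m - 2*c0^2*t^2) + (2*((A*c0)*c0)*t^3 - 2*g)|
          ≤ |A*t*(m - 2*c0^2*t^2)| + |2*((A*c0)*c0)*t^3 - 2*g| := abs_add_le _ _
        _ ≤ A*K8*t^4 + 4*Cα*K3*t^4 := by
            apply add_le_add
            · rw [abs_mul, _root_.abs_of_nonneg (by positivity : (0:ℝ) ≤ A*t)]
              calc A*t*|m - 2*c0^2*t^2| ≤ A*t*(K8*t^3) :=
                    mul_le_mul_of_nonneg_left hmdev (by positivity)
                _ = A*K8*t^4 := by ring
            · rw [e2, abs_neg, abs_mul, _root_.abs_of_nonneg (by norm_num : (0:ℝ) ≤ 2)]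
              linarith only [hgdev]
        _ = (A*K8 + 4*Cα*K3)*t^4 := by ring
    have h2 : |A*t*(g + (D2 - (m+g)))| ≤ A*(K9+K7)*t^4 := by
      rw [abs_mul, _root_.abs_of_nonneg (by positivity : (0:ℝ) ≤ A*t)]
      have h3 : |g + (D2 - (m+g))| ≤ (K9+K7)*t^3 := by
        calc |g + (D2 - (m+g))| ≤ |g| + |D2 - (m+g)| := abs_add_le _ _
          _ ≤ K9*t^3 + K7*t^4 := add_le_add hgabs hdb
          _ ≤ (K9+K7)*t^3 := by nlinarith only [ht4t3, hK7nn]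
      calc A*t*|g + (D2 - (m+g))| ≤ A*t*((K9+K7)*t^3) :=
            mul_le_mul_of_nonneg_left h3 (by positivity)
        _ = A*(K9+K7)*t^4 := by ring
    rw [hdec]
    calc |(A*t*m - 2*g) + A*t*(g + (D2 - (m+g))) - (D2 - (m+g))|
        ≤ |(A*t*m - 2*g) + A*t*(g + (D2 - (m+g)))| + |D2 - (m+g)| := abs_sub _ _
      _ ≤ |A*t*m - 2*g| + |A*t*(g + (D2 - (m+g)))| + |D2 - (m+g)| := by
          linarith only [abs_add_le (A*t*m - 2*g) (A*t*(g + (D2 - (m+g))))]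
      _ ≤ (A*K8 + 4*Cα*K3)*t^4 + A*(K9+K7)*t^4 + K7*t^4 := by
          linarith only [h1, h2, hdb]
      _ = K10*t^4 := by rw [hK10]; ring
  have hR1 : |N2/D2 - (1-A*t)| ≤ K11*t^2 := by
    have h1 : N2/D2 - (1-A*t) = (N2 - (1-A*t)*D2)/D2 := by
      field_simp
    rw [h1, abs_div, _root_.abs_of_pos hD2pos, div_le_iff₀ hD2pos]
    have hK11nn' : (0:ℝ) ≤ K11*t^2 := by positivity
    calc |N2 - (1-A*t)*D2| ≤ K10*t^4 := hnum
      _ = (2*K10/c0^2)*t^2 * (c0^2/2*t^2) := by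
          field_simp [hc0pos.ne']
      _ = K11*t^2 * (c0^2/2*t^2) := by rw [hK11]
      _ ≤ K11*t^2 * D2 := mul_le_mul_of_nonneg_left hD2low hK11nn'
  -- assembly
  have hlx : ‖1+μ‖^2 = 1+x := by rw [← hlam]; exact hlamsq
  have habs_rhon : ‖rhon a b n s al‖ = N2/D2 * ((1+x)^n)⁻¹ := by
    rw [rhon, hlam]
    have e1 : ((al:ℂ) + 1 - (1+μ)) = (al:ℂ) - μ := by ring
    have e2 : (1+(al:ℂ))*(1+μ) - 1 = (al:ℂ) + μ + (al:ℂ)*μ := by ring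
    rw [e1, e2]
    simp only [norm_mul, norm_pow, norm_div, norm_one]
    rw [div_pow, Complex.sq_norm, Complex.sq_norm, ← hN2, ← hD2, hlx, one_div, inv_pow]
  have hR2ub : ((1+x)^n)⁻¹ ≤ 1 := by
    apply inv_le_one_of_one_le₀
    exact one_le_pow₀ (by linarith only [hx0])
  have hR2nn : 0 ≤ ((1+x)^n)⁻¹ := by positivity
  have hAt1 : |1 - A*t| ≤ 1 := by
    rw [abs_le]; constructor
    · linarith only [htA]
    · nlinarith only [hApos, ht]
  rw [habs_rhon]
  have hdec2 : N2/D2*((1+x)^n)⁻¹ - (1 - A*t - B*t)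
      = (N2/D2 - (1-A*t))*((1+x)^n)⁻¹ + (1-A*t)*(((1+x)^n)⁻¹ - (1-B*t)) + A*B*t^2 := by
    ring
  rw [hdec2]
  have hp1 : |(N2/D2 - (1-A*t))*((1+x)^n)⁻¹| ≤ K11*t^2 := by
    rw [abs_mul, _root_.abs_of_nonneg hR2nn]
    calc |N2/D2 - (1-A*t)| * ((1+x)^n)⁻¹ ≤ (K11*t^2)*1 :=
          mul_le_mul hR1 hR2ub hR2nn (by positivity)
      _ = K11*t^2 := by ring
  have hp2 : |(1-A*t)*(((1+x)^n)⁻¹ - (1-B*t))| ≤ K6*t^2 := by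
    rw [abs_mul]
    calc |1-A*t| * |((1+x)^n)⁻¹ - (1-B*t)| ≤ 1*(K6*t^2) :=
          mul_le_mul hAt1 hR2 (abs_nonneg _) zero_le_one
      _ = K6*t^2 := by ring
  have hp3 : |A*B*t^2| = A*B*t^2 := _root_.abs_of_nonneg (by positivity)
  calc |(N2/D2 - (1-A*t))*((1+x)^n)⁻¹ + (1-A*t)*(((1+x)^n)⁻¹ - (1-B*t)) + A*B*t^2|
      ≤ |(N2/D2 - (1-A*t))*((1+x)^n)⁻¹ + (1-A*t)*(((1+x)^n)⁻¹ - (1-B*t))| + |A*B*t^2| := abs_add_le _ _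
    _ ≤ |(N2/D2 - (1-A*t))*((1+x)^n)⁻¹| + |(1-A*t)*(((1+x)^n)⁻¹ - (1-B*t))| + |A*B*t^2| := by
        linarith only [abs_add_le ((N2/D2 - (1-A*t))*((1+x)^n)⁻¹) ((1-A*t)*(((1+x)^n)⁻¹ - (1-B*t)))]
    _ ≤ K11*t^2 + K6*t^2 + A*B*t^2 := by rw [hp3]; linarith only [hp1, hp2]
    _ ≤ (K11 + K6 + A*B + 1)*t^2 := by nlinarith only [sq_nonneg t]




/-- For an integer overlap `n ≥ 1`, `a > 0`, `C_α, C_ω > 0` and `δ ∈ (0, 1/2]`, with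
`b = -(2 + ε)a`, `α(ε) = C_α ε^δ` and `ω̃(ε) = C_ω ε^δ`, as `ε → 0⁺` one has
`|ρ_n(i ω̃, α, -α)| = 1 - (2√2 C_α √a/√C_ω) ε^{δ/2} - (n √2 √C_ω/√a) ε^{δ/2} + O(ε^δ)`. -/
theorem rhon_at_interior_max_asymptotics (a Cα Cω δ : ℝ) (n : ℕ) (hn : 1 ≤ n)
    (ha : 0 < a) (hCα : 0 < Cα) (hCω : 0 < Cω) (hδ1 : 0 < δ) (hδ2 : δ ≤ 1 / 2) :
    ∃ C > (0 : ℝ), ∃ ε₀ > (0 : ℝ), ∀ ε : ℝ, 0 < ε → ε < ε₀ →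
      |‖rhon a (-(2 + ε) * a) n (Complex.I * ((Cω * ε ^ δ : ℝ) : ℂ)) (Cα * ε ^ δ)‖
        - (1 - (2 * Real.sqrt 2 * Cα * Real.sqrt a / Real.sqrt Cω) * ε ^ (δ / 2)
             - ((n : ℝ) * Real.sqrt 2 * Real.sqrt Cω / Real.sqrt a) * ε ^ (δ / 2))|
        ≤ C * ε ^ δ := by
  obtain ⟨K, hK, t₁, ht₁, hcore⟩ := core a Cα Cω n ha hCα hCω
  have hδne : δ ≠ 0 := ne_of_gt hδ1
  refine ⟨K, hK, min 1 (t₁ ^ (2/δ)), lt_min one_pos (Real.rpow_pos_of_pos ht₁ _), ?_⟩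
  intro ε hε hεlt
  have hε1 : ε < 1 := lt_of_lt_of_le hεlt (min_le_left _ _)
  have hε2 : ε ≤ t₁ ^ (2/δ) := le_of_lt (lt_of_lt_of_le hεlt (min_le_right _ _))
  set t : ℝ := ε ^ (δ/2) with htdef
  have ht : 0 < t := Real.rpow_pos_of_pos hε _
  have ht2 : t^2 = ε^δ := by
    rw [htdef, ← Real.rpow_natCast (ε ^ (δ/2)) 2, ← Real.rpow_mul hε.le]
    norm_num
  have htle : t ≤ t₁ := by
    have h1 : t ≤ (t₁ ^ (2/δ)) ^ (δ/2) := by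
      rw [htdef]
      exact Real.rpow_le_rpow hε.le hε2 (by positivity)
    rwa [← Real.rpow_mul ht₁.le, show (2/δ)*(δ/2) = 1 by field_simp, Real.rpow_one] at h1
  have hε4 : ε ≤ t^4 := by
    have h1 : t^4 = ε^(2*δ) := by
      rw [htdef, ← Real.rpow_natCast (ε ^ (δ/2)) 4, ← Real.rpow_mul hε.le]
      norm_num
      rw [show δ/2*4 = 2*δ by ring]
    rw [h1]
    calc ε = ε^(1:ℝ) := (Real.rpow_one ε).symm
      _ ≤ ε^(2*δ) := Real.rpow_le_rpow_of_exponent_ge hε hε1.le (by linarith)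
  have hmain := hcore t ht htle ε hε hε4
  rw [← ht2]
  exact hmain
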